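/- arXiv:1812.11550 — 3 statements merged into one kernel-verified Lean document; each statement's English description precedes it below -/
import Mathlib

section
/- Let A be a unital ring, τ : A → C a linear functional with the trace property τ(xy) = τ(yx) for all x, y ∈ A, and let a, r, r' ∈ A be such that both r and r' are almost-inverses of a in the sense that 1 - ar, 1 - ra, 1 - ar', 1 - r'a all lie in a two-sided ideal I on which τ is defined. Then τ(1 - ra) - τ(1 - ar) = τ(1 - r'a) - τ(1 - ar'), i.e., the localized index τ([a, r]) does not depend on the choice of almost-inverse r. -/
/-- The localized index `τ(1 - ra) - τ(1 - ar)` does not depend on the choice of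
the almost-inverse `r` of `a` modulo a two-sided ideal `I`, for a trace `τ`. -/
theorem index_independent_of_parametrix {A C : Type*} [Ring A] [AddCommGroup C]
    (I : TwoSidedIdeal A) (τ : A →+ C)
    (htr : ∀ x y : A, x * y ∈ I → y * x ∈ I → τ (x * y) = τ (y * x))
    (a r r' : A)
    (h1 : 1 - a * r ∈ I) (h2 : 1 - r * a ∈ I)
    (h3 : 1 - a * r' ∈ I) (h4 : 1 - r' * a ∈ I) :
    τ (1 - r * a) - τ (1 - a * r) = τ (1 - r' * a) - τ (1 - a * r') := by
  have h5 : a * (r' - r) ∈ I := by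
    have := I.sub_mem h1 h3
    simpa [mul_sub, sub_sub_sub_cancel_left] using this
  have h6 : (r' - r) * a ∈ I := by
    have := I.sub_mem h2 h4
    simpa [sub_mul, sub_sub_sub_cancel_left] using this
  have key := htr a (r' - r) h5 h6
  have e1 : (1 - r * a) - (1 - r' * a) = (r' - r) * a := by noncomm_ring
  have e2 : (1 - a * r) - (1 - a * r') = a * (r' - r) := by noncomm_ring
  have t1 := congrArg τ e1
  have t2 := congrArg τ e2
  rw [map_sub] at t1 t2
  rw [sub_eq_sub_iff_sub_eq_sub, t1, t2, key]
end

section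
/- Let A be a unital ring, a, r ∈ A with 1 - a·r and 1 - r·a in a two-sided ideal I, and τ a trace on I (τ(xy) = τ(yx) for x ∈ A, y ∈ I with xy, yx ∈ I). Define W = [[(2-ar)a, 1-ar],[ra-1, r]] in M₂(A) and P₀ = [[1,0],[0,0]]. Then the matrix trace extension of τ satisfies τ(W P₀ W⁻¹ - P₀) = τ(1 - ra) - τ(1 - ar). -/
/-- The matrix-trace extension of a trace `τ` on an ideal `I` satisfies
`τ(W P₀ W⁻¹ - P₀) = τ(1 - ra) - τ(1 - ar)` for the explicit invertible `W`. -/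
theorem index_via_projections {A C : Type*} [Ring A] [AddCommGroup C]
    (I : TwoSidedIdeal A) (τ : A →+ C)
    (htr : ∀ x y : A, y ∈ I → τ (x * y) = τ (y * x))
    (a r : A) (h1 : 1 - a * r ∈ I) (h2 : 1 - r * a ∈ I) :
    let W : Matrix (Fin 2) (Fin 2) A :=
      !![(2 - a * r) * a, 1 - a * r; r * a - 1, r]
    let Winv : Matrix (Fin 2) (Fin 2) A :=
      !![r, r * a - 1; 1 - a * r, a * (2 - r * a)]
    let P0 : Matrix (Fin 2) (Fin 2) A := !![1, 0; 0, 0]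
    τ ((W * P0 * Winv - P0) 0 0) + τ ((W * P0 * Winv - P0) 1 1)
      = τ (1 - r * a) - τ (1 - a * r) := by
  intro W Winv P0
  set y : A := a * (1 - r * a) with hy
  have hyI : y ∈ I := I.mul_mem_left a _ h2
  have key : τ (r * y) = τ (y * r) := htr r y hyI
  have e00 : (W * P0 * Winv - P0) 0 0 = y * r - (1 - a * r) := by
    simp [W, Winv, P0, Matrix.mul_apply, Fin.sum_univ_two, hy]
    noncomm_ring
  have e11 : (W * P0 * Winv - P0) 1 1 = (1 - r * a) - r * y := by
    simp [W, Winv, P0, Matrix.mul_apply, Fin.sum_univ_two, hy]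
    noncomm_ring
  rw [e00, e11]; simp only [map_sub]; rw [key]
  abel
end

section
/- Let A be a unital ring with a two-sided ideal I and τ : I → C a trace (τ(xy) = τ(yx) whenever x ∈ A, y ∈ I). Define for any a ∈ A with almost-inverse r (1 − ar, 1 − ra ∈ I) the index ind(a) = τ(1 − ra) − τ(1 − ar). If a, b ∈ A are both invertible modulo I, then ind(ab) = ind(a) + ind(b). -/
private lemma index_indep {A C : Type*} [Ring A] [AddCommGroup C]
    (I : TwoSidedIdeal A) (τ : A →+ C)
    (htr : ∀ x y : A, y ∈ I → τ (x * y) = τ (y * x))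
    (a r r' : A) (h1 : 1 - a * r ∈ I) (h2 : 1 - r' * a ∈ I) :
    τ (1 - r * a) - τ (1 - a * r) = τ (1 - r' * a) - τ (1 - a * r') := by
  have e1 : τ (r' * ((1 - a * r) * a)) = τ ((1 - a * r) * a * r') :=
    htr _ _ (I.mul_mem_right _ _ h1)
  have e1' : τ ((a * r') * (1 - a * r)) = τ ((1 - a * r) * (a * r')) :=
    htr _ _ h1
  have e2' : τ (a * ((1 - r' * a) * r)) = τ ((1 - r' * a) * r * a) :=
    htr _ _ (I.mul_mem_right _ _ h2)
  have key : τ ((r' - r) * a) = τ (a * (r' - r)) := by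
    have d1 : (r' - r) * a = r' * ((1 - a * r) * a) - (1 - r' * a) * r * a := by
      noncomm_ring
    have d2 : a * (r' - r) = (a * r') * (1 - a * r) - a * ((1 - r' * a) * r) := by
      noncomm_ring
    rw [d1, d2, map_sub, map_sub, e1, e2', mul_assoc (1 - a * r) a r', ← e1']
  have key' : τ (r' * a) - τ (r * a) = τ (a * r') - τ (a * r) := by
    rw [← map_sub, ← map_sub, ← sub_mul, ← mul_sub]
    exact key
  simp only [map_sub]
  linear_combination (norm := abel1) key'

/-- Additivity of the localized index: for `a`, `b` invertible modulo a
two-sided ideal `I` with almost-inverses `ra`, `rb`, and any almost-inverse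
`rab` of `a*b`, one has `ind(ab) = ind(a) + ind(b)`. -/
theorem index_additive {A C : Type*} [Ring A] [AddCommGroup C]
    (I : TwoSidedIdeal A) (τ : A →+ C)
    (htr : ∀ x y : A, y ∈ I → τ (x * y) = τ (y * x))
    (a b ra rb rab : A)
    (ha1 : 1 - a * ra ∈ I) (ha2 : 1 - ra * a ∈ I)
    (hb1 : 1 - b * rb ∈ I) (hb2 : 1 - rb * b ∈ I)
    (hab1 : 1 - (a * b) * rab ∈ I) (hab2 : 1 - rab * (a * b) ∈ I) :
    τ (1 - rab * (a * b)) - τ (1 - (a * b) * rab)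
      = (τ (1 - ra * a) - τ (1 - a * ra)) + (τ (1 - rb * b) - τ (1 - b * rb)) := by
  have A1 : (1 : A) - (rb * ra) * (a * b) = (1 - rb * b) + rb * ((1 - ra * a) * b) := by
    noncomm_ring
  have h2' : 1 - (rb * ra) * (a * b) ∈ I := by
    rw [A1]
    exact I.add_mem hb2 (I.mul_mem_left _ _ (I.mul_mem_right _ _ ha2))
  have step1 := index_indep I τ htr (a * b) rab (rb * ra) hab1 h2'
  rw [step1]
  have A2 : (1 : A) - (a * b) * (rb * ra) = (1 - a * ra) + a * ((1 - b * rb) * ra) := by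
    noncomm_ring
  have t1 : τ (rb * ((1 - ra * a) * b)) = τ ((1 - ra * a) * b * rb) :=
    htr _ _ (I.mul_mem_right _ _ ha2)
  have t2 : τ (a * ((1 - b * rb) * ra)) = τ ((1 - b * rb) * ra * a) :=
    htr _ _ (I.mul_mem_right _ _ hb1)
  have B1 : (1 - ra * a) * b * rb = (1 - ra * a) - (1 - ra * a) * (1 - b * rb) := by
    noncomm_ring
  have B2 : (1 - b * rb) * ra * a = (1 - b * rb) - (1 - b * rb) * (1 - ra * a) := by
    noncomm_ring
  have t3 : τ ((1 - ra * a) * (1 - b * rb)) = τ ((1 - b * rb) * (1 - ra * a)) :=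
    htr _ _ hb1
  rw [A1, A2, map_add, map_add, t1, t2, B1, B2]
  simp only [map_sub]
  rw [t3]
  abel
end
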